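/- Let Ψ : ℝ → ℝ be the bump function Ψ(s) = exp(1 + 1/(s²−1)) for |s| < 1 and Ψ(s) = 0 for |s| ≥ 1, and define u_R : ℝ × ℝ → ℝ by u_R(x,t) = (2/3)[Ψ((5/2)(x−2t)+1/4) + Ψ((5/2)(x+2t)−21/4)] + (2/9)[Ψ((5/2)(x−2t)+11/4) + Ψ((5/2)(x+2t)−31/4)]. Then u_R satisfies the wave equation with speed 2, ∂ₜₜu_R(x,t) = 4·∂ₓₓu_R(x,t), for all (x,t) ∈ ℝ²; moreover for every x ∈ [1/2,1] one has u_R(x,0) = 0 and ∂ₜu_R(x,0) = 0. -/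

import Mathlib

open scoped ContDiff

/-- The bump function `Ψ(s) = exp(1 + 1/(s²−1))` on `(−1,1)`, extended by zero. -/
noncomputable def Psi (s : ℝ) : ℝ :=
  if |s| < 1 then Real.exp (1 + 1 / (s ^ 2 - 1)) else 0

lemma Psi_eq : Psi = fun s => Real.exp 1 * expNegInvGlue (1 - s ^ 2) := by
  funext s
  unfold Psi expNegInvGlue
  rcases lt_or_ge (|s|) 1 with h | h
  · have hs : s ^ 2 < 1 := by
      have := abs_lt.mp h
      nlinarith
    rw [if_pos h, if_neg (by linarith)]
    rw [← Real.exp_add]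
    congr 1
    have h2 : s ^ 2 - 1 = -(1 - s ^ 2) := by ring
    rw [one_div, h2, inv_neg]
  · have hs : 1 ≤ s ^ 2 := by nlinarith [sq_abs s, abs_nonneg s]
    rw [if_neg (not_lt.mpr h), if_pos (by linarith), mul_zero]

lemma Psi_contDiff : ContDiff ℝ ∞ Psi := by
  rw [Psi_eq]
  have h : ContDiff ℝ ∞ (fun s : ℝ => 1 - s ^ 2) := by fun_prop
  exact ContDiff.mul contDiff_const (expNegInvGlue.contDiff.comp h)

lemma Psi_diff : Differentiable ℝ Psi := Psi_contDiff.differentiable (by simp)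

lemma derivPsi_contDiff : ContDiff ℝ ∞ (deriv Psi) :=
  (contDiff_infty_iff_deriv.mp Psi_contDiff).2

lemma derivPsi_diff : Differentiable ℝ (deriv Psi) := derivPsi_contDiff.differentiable (by simp)

/-- derivative of an affine precomposition -/
lemma hasDerivAt_affine_comp (f f' : ℝ → ℝ) (hf : ∀ s, HasDerivAt f (f' s) s)
    (c a t : ℝ) : HasDerivAt (fun t => f (c * t + a)) (c * f' (c * t + a)) t := by
  have h1 : HasDerivAt (fun t : ℝ => c * t + a) c t := by
    simpa using ((hasDerivAt_id t).const_mul c).add_const a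
  rw [mul_comm c (f' _)]; exact (hf (c * t + a)).comp t h1

lemma deriv1_form (c₁ c₂ c₃ c₄ a₁ a₂ a₃ a₄ : ℝ) :
    deriv (fun t => (2/3) * (Psi (c₁*t + a₁) + Psi (c₂*t + a₂))
        + (2/9) * (Psi (c₃*t + a₃) + Psi (c₄*t + a₄)))
      = fun t => (2/3) * (c₁ * deriv Psi (c₁*t + a₁) + c₂ * deriv Psi (c₂*t + a₂))
        + (2/9) * (c₃ * deriv Psi (c₃*t + a₃) + c₄ * deriv Psi (c₄*t + a₄)) := by
  funext t
  have hP : ∀ s, HasDerivAt Psi (deriv Psi s) s := fun s => (Psi_diff s).hasDerivAt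
  exact HasDerivAt.deriv
    ((((hasDerivAt_affine_comp _ _ hP c₁ a₁ t).add
        (hasDerivAt_affine_comp _ _ hP c₂ a₂ t)).const_mul (2/3)).add
      ((((hasDerivAt_affine_comp _ _ hP c₃ a₃ t).add
        (hasDerivAt_affine_comp _ _ hP c₄ a₄ t)).const_mul (2/9))))

lemma deriv2_form (c₁ c₂ c₃ c₄ a₁ a₂ a₃ a₄ t : ℝ) :
    deriv (deriv (fun t => (2/3) * (Psi (c₁*t + a₁) + Psi (c₂*t + a₂))
        + (2/9) * (Psi (c₃*t + a₃) + Psi (c₄*t + a₄)))) t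
      = (2/3) * (c₁^2 * deriv (deriv Psi) (c₁*t + a₁) + c₂^2 * deriv (deriv Psi) (c₂*t + a₂))
        + (2/9) * (c₃^2 * deriv (deriv Psi) (c₃*t + a₃)
            + c₄^2 * deriv (deriv Psi) (c₄*t + a₄)) := by
  rw [deriv1_form]
  have hP : ∀ s, HasDerivAt (deriv Psi) (deriv (deriv Psi) s) s :=
    fun s => (derivPsi_diff s).hasDerivAt
  have h := HasDerivAt.deriv
    (((((hasDerivAt_affine_comp _ _ hP c₁ a₁ t).const_mul c₁).add
        ((hasDerivAt_affine_comp _ _ hP c₂ a₂ t).const_mul c₂)).const_mul (2/3)).add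
      (((((hasDerivAt_affine_comp _ _ hP c₃ a₃ t).const_mul c₃).add
        ((hasDerivAt_affine_comp _ _ hP c₄ a₄ t).const_mul c₄)).const_mul (2/9))))
  exact h.trans (by ring)

lemma Psi_zero {s : ℝ} (h : 1 ≤ |s|) : Psi s = 0 := by
  unfold Psi
  rw [if_neg (not_lt.mpr h)]

lemma derivPsi_zero {s : ℝ} (h : 1 < |s|) : deriv Psi s = 0 := by
  have hopen : IsOpen {y : ℝ | 1 < |y|} := isOpen_lt continuous_const continuous_abs
  have hev : Psi =ᶠ[nhds s] fun _ => 0 := by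
    filter_upwards [hopen.mem_nhds h] with y hy using Psi_zero hy.le
  rw [hev.deriv_eq, deriv_const]

/-- Right part of the exact solution of the transmission problem with piecewise-constant
velocity: `u_R` solves the wave equation with speed 2 on ℝ², and on `[1/2,1]` it has
vanishing initial data `u_R(x,0) = 0` and `∂ₜu_R(x,0) = 0`. -/
theorem transmission_right_solution (uR : ℝ → ℝ → ℝ)
    (huR : ∀ x t, uR x t =
      (2 / 3) * (Psi ((5 / 2) * (x - 2 * t) + 1 / 4) + Psi ((5 / 2) * (x + 2 * t) - 21 / 4))
        + (2 / 9) * (Psi ((5 / 2) * (x - 2 * t) + 11 / 4)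
            + Psi ((5 / 2) * (x + 2 * t) - 31 / 4))) :
    (∀ x t : ℝ,
      deriv (deriv (fun s => uR x s)) t = 4 * deriv (deriv (fun y => uR y t)) x) ∧
    (∀ x ∈ Set.Icc (1 / 2 : ℝ) 1,
      uR x 0 = 0 ∧ deriv (fun s => uR x s) 0 = 0) := by
  have ht : ∀ x : ℝ, (fun s => uR x s) = fun s =>
      (2/3) * (Psi ((-5)*s + ((5/2)*x + 1/4)) + Psi (5*s + ((5/2)*x - 21/4)))
        + (2/9) * (Psi ((-5)*s + ((5/2)*x + 11/4)) + Psi (5*s + ((5/2)*x - 31/4))) := by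
    intro x; funext s; rw [huR]
    have e1 : (5/2:ℝ) * (x - 2*s) + 1/4 = (-5)*s + ((5/2)*x + 1/4) := by ring
    have e2 : (5/2:ℝ) * (x + 2*s) - 21/4 = 5*s + ((5/2)*x - 21/4) := by ring
    have e3 : (5/2:ℝ) * (x - 2*s) + 11/4 = (-5)*s + ((5/2)*x + 11/4) := by ring
    have e4 : (5/2:ℝ) * (x + 2*s) - 31/4 = 5*s + ((5/2)*x - 31/4) := by ring
    rw [e1, e2, e3, e4]
  have hx : ∀ t : ℝ, (fun y => uR y t) = fun y =>
      (2/3) * (Psi ((5/2)*y + (-(5*t) + 1/4)) + Psi ((5/2)*y + (5*t - 21/4)))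
        + (2/9) * (Psi ((5/2)*y + (-(5*t) + 11/4)) + Psi ((5/2)*y + (5*t - 31/4))) := by
    intro t; funext y; rw [huR]
    have e1 : (5/2:ℝ) * (y - 2*t) + 1/4 = (5/2)*y + (-(5*t) + 1/4) := by ring
    have e2 : (5/2:ℝ) * (y + 2*t) - 21/4 = (5/2)*y + (5*t - 21/4) := by ring
    have e3 : (5/2:ℝ) * (y - 2*t) + 11/4 = (5/2)*y + (-(5*t) + 11/4) := by ring
    have e4 : (5/2:ℝ) * (y + 2*t) - 31/4 = (5/2)*y + (5*t - 31/4) := by ring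
    rw [e1, e2, e3, e4]
  constructor
  · intro x t
    rw [ht x, hx t, deriv2_form, deriv2_form]
    have e1 : (-5:ℝ)*t + ((5/2)*x + 1/4) = (5/2)*x + (-(5*t) + 1/4) := by ring
    have e2 : (5:ℝ)*t + ((5/2)*x - 21/4) = (5/2)*x + (5*t - 21/4) := by ring
    have e3 : (-5:ℝ)*t + ((5/2)*x + 11/4) = (5/2)*x + (-(5*t) + 11/4) := by ring
    have e4 : (5:ℝ)*t + ((5/2)*x - 31/4) = (5/2)*x + (5*t - 31/4) := by ring
    rw [e1, e2, e3, e4]; ring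
  · rintro x ⟨hx1, hx2⟩
    constructor
    · rw [huR]
      rw [Psi_zero (s := (5/2)*(x - 2*0) + 1/4) (by rw [le_abs]; left; linarith),
        Psi_zero (s := (5/2)*(x + 2*0) - 21/4) (by rw [le_abs]; right; linarith),
        Psi_zero (s := (5/2)*(x - 2*0) + 11/4) (by rw [le_abs]; left; linarith),
        Psi_zero (s := (5/2)*(x + 2*0) - 31/4) (by rw [le_abs]; right; linarith)]
      ring
    · rw [ht x, deriv1_form]
      beta_reduce
      rw [derivPsi_zero (s := (-5)*0 + ((5/2)*x + 1/4)) (by rw [lt_abs]; left; linarith),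
        derivPsi_zero (s := 5*0 + ((5/2)*x - 21/4)) (by rw [lt_abs]; right; linarith),
        derivPsi_zero (s := (-5)*0 + ((5/2)*x + 11/4)) (by rw [lt_abs]; left; linarith),
        derivPsi_zero (s := 5*0 + ((5/2)*x - 31/4)) (by rw [lt_abs]; right; linarith)]
      ring
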